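/- If M(U,ξ) > 0 then ∂_f H₀(M(U,ξ),ξ) = η'(U)·(1,ξ)ᵀ = gh − u²/2 + ξu, and if M(U,ξ) = 0 then ∂_f H₀(M(U,ξ),ξ) = ξ²/2 ≥ gh − u²/2 + ξu. -/

import Mathlib

open MeasureTheory Real

noncomputable def Mx (g h u ξ : ℝ) : ℝ := (1/(g*π)) * Real.sqrt (max 0 (2*g*h - (ξ-u)^2))
noncomputable def H0 (g f ξ : ℝ) : ℝ := ξ^2*f/2 + (g^2*π^2/6)*f^3
noncomputable def dH0 (g f ξ : ℝ) : ℝ := ξ^2/2 + (g^2*π^2/2)*f^2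

theorem dH0_at_maxwellian (g h u ξ : ℝ) (hg : 0 < g) (hh : 0 ≤ h) :
    (0 < Mx g h u ξ → dH0 g (Mx g h u ξ) ξ = g*h - u^2/2 + ξ*u) ∧
    (Mx g h u ξ = 0 → dH0 g (Mx g h u ξ) ξ = ξ^2/2 ∧ g*h - u^2/2 + ξ*u ≤ ξ^2/2) := by
  have hgpi : g * π ≠ 0 := by positivity
  constructor
  · intro hM
    have hs2 : (Real.sqrt (max 0 (2*g*h - (ξ-u)^2)))^2 = max 0 (2*g*h - (ξ-u)^2) :=
      Real.sq_sqrt (le_max_left _ _)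
    have hpos : 0 < 2*g*h - (ξ-u)^2 := by
      by_contra hc
      push_neg at hc
      have : max 0 (2*g*h - (ξ-u)^2) = 0 := max_eq_left hc
      simp [Mx, this] at hM
    have hmax : max 0 (2*g*h - (ξ-u)^2) = 2*g*h - (ξ-u)^2 := max_eq_right hpos.le
    have hM2 : (Mx g h u ξ)^2 = (2*g*h - (ξ-u)^2) / (g*π)^2 := by
      simp only [Mx, mul_pow, hs2, hmax]
      field_simp
      exact Real.sq_sqrt (by linarith)
    simp only [dH0, hM2]
    have hpi : π ≠ 0 := Real.pi_ne_zero
    field_simp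
    ring
  · intro hM
    have hs0 : Real.sqrt (max 0 (2*g*h - (ξ-u)^2)) = 0 := by
      have := hM
      simp only [Mx] at this
      rcases mul_eq_zero.mp this with h1 | h1
      · exact absurd h1 (by positivity)
      · exact h1
    have hle : 2*g*h - (ξ-u)^2 ≤ 0 := by
      by_contra hc
      push_neg at hc
      have : max 0 (2*g*h - (ξ-u)^2) = 2*g*h - (ξ-u)^2 := max_eq_right hc.le
      rw [this] at hs0
      exact absurd (Real.sqrt_eq_zero hc.le |>.mp hs0) (ne_of_gt hc)
    refine ⟨by simp [dH0, hM], ?_⟩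
    nlinarith [sq_nonneg (ξ - u)]
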